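/- The non-cooperative AP channel selection game with payoffs Ũ_n(a) = (P_n/d_n^θ) / (ω^n_{a_n} + Σ_{i≠n : a_i = a_n} P_i/d_{in}^θ) is an ordinal potential game with potential function Φ(a) = − Σ_i Σ_{j≠i} (P_i P_j / d_{ij}^θ) 1{a_i = a_j} − 2 Σ_i P_i ω^i_{a_i}. Specifically, if player k unilaterally changes its channel from a_k to a'_k, then Φ(a') − Φ(a) = 2 d_k^θ · (ω^k_{a'_k} + Σ_{i≠k: a_i=a'_k} P_i/d_{ik}^θ) · (ω^k_{a_k} + Σ_{i≠k: a_i=a_k} P_i/d_{ik}^θ) · (Ũ_k(a'_k, a_{-k}) − Ũ_k(a_k, a_{-k})). -/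

import Mathlib

open Finset

/-- Sign-based ordinal potential property. -/
def IsOrdinalPotential {I : Type*} [DecidableEq I] {A : I → Type*}
    (U : I → (∀ i, A i) → ℝ) (Φ : (∀ i, A i) → ℝ) : Prop :=
  ∀ (n : I) (a : ∀ i, A i) (x : A n),
    Real.sign (Φ (Function.update a n x) - Φ a) =
      Real.sign (U n (Function.update a n x) - U n a)

theorem stmt5 {I : Type*} [Fintype I] [DecidableEq I] {C : Type*} [DecidableEq C]
    (P d : I → ℝ) (D : I → I → ℝ) (ω : I → C → ℝ) (θ : ℝ)
    (hP : ∀ i, 0 < P i) (hd : ∀ i, 0 < d i)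
    (hD : ∀ i j, i ≠ j → 0 < D i j) (hDsymm : ∀ i j, D i j = D j i)
    (hω : ∀ n c, 0 < ω n c) (hθ : 0 < θ)
    (Ut : I → (I → C) → ℝ)
    (hUt : ∀ n a, Ut n a = (P n / d n ^ θ) /
      (ω n (a n) + ∑ i ∈ Finset.univ.erase n, if a i = a n then P i / D i n ^ θ else 0))
    (Φ : (I → C) → ℝ)
    (hΦ : ∀ a, Φ a =
      -(∑ i : I, ∑ j ∈ Finset.univ.erase i, (P i * P j / D i j ^ θ) * (if a i = a j then 1 else 0))
        - 2 * ∑ i : I, P i * ω i (a i)) :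
    (∀ (a : I → C) (k : I) (c : C),
      Φ (Function.update a k c) - Φ a =
        2 * d k ^ θ *
          (ω k c + ∑ i ∈ Finset.univ.erase k, if a i = c then P i / D i k ^ θ else 0) *
          (ω k (a k) + ∑ i ∈ Finset.univ.erase k, if a i = a k then P i / D i k ^ θ else 0) *
          (Ut k (Function.update a k c) - Ut k a)) ∧
    IsOrdinalPotential (fun n a => Ut n a) Φ := by
  have hdθ : ∀ i, (0:ℝ) < d i ^ θ := fun i => Real.rpow_pos_of_pos (hd i) θ
  have hW : ∀ (k : I) (a : I → C) (c : C),
      0 < ω k c + ∑ i ∈ Finset.univ.erase k, (if a i = c then P i / D i k ^ θ else 0) := by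
    intro k a c
    have h0 : 0 ≤ ∑ i ∈ Finset.univ.erase k, (if a i = c then P i / D i k ^ θ else 0) := by
      apply Finset.sum_nonneg
      intro i hi
      have hik : i ≠ k := Finset.ne_of_mem_erase hi
      split
      · exact le_of_lt (div_pos (hP i) (Real.rpow_pos_of_pos (hD i k hik) θ))
      · exact le_refl 0
    linarith [hω k c]
  -- key computation for the potential difference
  have hdiff : ∀ (a : I → C) (k : I) (c : C),
      Φ (Function.update a k c) - Φ a =
        2 * P k * ((ω k (a k) + ∑ i ∈ Finset.univ.erase k, if a i = a k then P i / D i k ^ θ else 0)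
          - (ω k c + ∑ i ∈ Finset.univ.erase k, if a i = c then P i / D i k ^ θ else 0)) := by
    intro a k c
    set a' := Function.update a k c with ha'
    have ha'k : a' k = c := Function.update_self k c a
    have ha'i : ∀ i, i ≠ k → a' i = a i := fun i hi => Function.update_of_ne hi c a
    -- decomposition of the double sum
    have hF : ∀ b : I → C,
        (∑ i : I, ∑ j ∈ Finset.univ.erase i, (P i * P j / D i j ^ θ) * (if b i = b j then 1 else 0))
        = 2 * (P k * ∑ j ∈ Finset.univ.erase k, ((P j / D j k ^ θ) * (if b j = b k then 1 else 0)))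
          + ∑ i ∈ Finset.univ.erase k, ∑ j ∈ (Finset.univ.erase i).erase k,
              (P i * P j / D i j ^ θ) * (if b i = b j then 1 else 0) := by
      intro b
      rw [← Finset.add_sum_erase Finset.univ _ (Finset.mem_univ k)]
      have h1 : ∀ i ∈ Finset.univ.erase k,
          (∑ j ∈ Finset.univ.erase i, (P i * P j / D i j ^ θ) * (if b i = b j then 1 else 0))
          = (P i * P k / D i k ^ θ) * (if b i = b k then 1 else 0)
            + ∑ j ∈ (Finset.univ.erase i).erase k,
                (P i * P j / D i j ^ θ) * (if b i = b j then 1 else 0) := by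
        intro i hi
        have hik : i ≠ k := Finset.ne_of_mem_erase hi
        rw [← Finset.add_sum_erase (Finset.univ.erase i) _
          (Finset.mem_erase.mpr ⟨fun h => hik h.symm, Finset.mem_univ k⟩)]
      rw [Finset.sum_congr rfl h1, Finset.sum_add_distrib]
      have h2 : (∑ j ∈ Finset.univ.erase k, (P k * P j / D k j ^ θ) * (if b k = b j then 1 else 0))
          = P k * ∑ j ∈ Finset.univ.erase k, ((P j / D j k ^ θ) * (if b j = b k then 1 else 0)) := by
        rw [Finset.mul_sum]
        apply Finset.sum_congr rfl
        intro j hj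
        rw [hDsymm k j]
        by_cases h : b k = b j
        · rw [if_pos h, if_pos h.symm]; ring
        · rw [if_neg h, if_neg (fun h' => h h'.symm)]; ring
      have h3 : (∑ i ∈ Finset.univ.erase k, (P i * P k / D i k ^ θ) * (if b i = b k then 1 else 0))
          = P k * ∑ j ∈ Finset.univ.erase k, ((P j / D j k ^ θ) * (if b j = b k then 1 else 0)) := by
        rw [Finset.mul_sum]
        apply Finset.sum_congr rfl
        intro j hj
        ring
      rw [h2, h3]
      ring
    -- the linear term
    have hL : ∀ b : I → C, (∑ i : I, P i * ω i (b i))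
        = P k * ω k (b k) + ∑ i ∈ Finset.univ.erase k, P i * ω i (b i) :=
      fun b => (Finset.add_sum_erase Finset.univ _ (Finset.mem_univ k)).symm
    rw [hΦ, hΦ, hF, hF, hL a', hL a]
    -- residual parts coincide
    have hR : (∑ i ∈ Finset.univ.erase k, ∑ j ∈ (Finset.univ.erase i).erase k,
          (P i * P j / D i j ^ θ) * (if a' i = a' j then 1 else 0))
        = ∑ i ∈ Finset.univ.erase k, ∑ j ∈ (Finset.univ.erase i).erase k,
          (P i * P j / D i j ^ θ) * (if a i = a j then 1 else 0) := by
      apply Finset.sum_congr rfl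
      intro i hi
      apply Finset.sum_congr rfl
      intro j hj
      rw [ha'i i (Finset.ne_of_mem_erase hi), ha'i j (Finset.ne_of_mem_erase hj)]
    have hL' : (∑ i ∈ Finset.univ.erase k, P i * ω i (a' i))
        = ∑ i ∈ Finset.univ.erase k, P i * ω i (a i) := by
      apply Finset.sum_congr rfl
      intro i hi
      rw [ha'i i (Finset.ne_of_mem_erase hi)]
    have hS : ∀ c' : C, (∑ j ∈ Finset.univ.erase k, ((P j / D j k ^ θ) * (if a' j = c' then 1 else 0)))
        = ∑ j ∈ Finset.univ.erase k, (if a j = c' then P j / D j k ^ θ else 0) := by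
      intro c'
      apply Finset.sum_congr rfl
      intro j hj
      rw [ha'i j (Finset.ne_of_mem_erase hj), mul_ite, mul_one, mul_zero]
    have hSa : ∀ c' : C, (∑ j ∈ Finset.univ.erase k, ((P j / D j k ^ θ) * (if a j = c' then 1 else 0)))
        = ∑ j ∈ Finset.univ.erase k, (if a j = c' then P j / D j k ^ θ else 0) := by
      intro c'
      apply Finset.sum_congr rfl
      intro j hj
      rw [mul_ite, mul_one, mul_zero]
    rw [hR, hL', ha'k, hS c, hSa (a k)]
    ring
  -- the first conjunct
  have key : ∀ (a : I → C) (k : I) (c : C),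
      Φ (Function.update a k c) - Φ a =
        2 * d k ^ θ *
          (ω k c + ∑ i ∈ Finset.univ.erase k, if a i = c then P i / D i k ^ θ else 0) *
          (ω k (a k) + ∑ i ∈ Finset.univ.erase k, if a i = a k then P i / D i k ^ θ else 0) *
          (Ut k (Function.update a k c) - Ut k a) := by
    intro a k c
    set a' := Function.update a k c with ha'
    have ha'k : a' k = c := Function.update_self k c a
    have ha'i : ∀ i, i ≠ k → a' i = a i := fun i hi => Function.update_of_ne hi c a
    have hUa' : Ut k a' = (P k / d k ^ θ) /
        (ω k c + ∑ i ∈ Finset.univ.erase k, if a i = c then P i / D i k ^ θ else 0) := by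
      rw [hUt]
      congr 1
      rw [ha'k]
      congr 1
      apply Finset.sum_congr rfl
      intro i hi
      rw [ha'i i (Finset.ne_of_mem_erase hi)]
    rw [hdiff, hUa', hUt k a]
    have alg : ∀ (p D1 W1 W2 : ℝ), 0 < D1 → 0 < W1 → 0 < W2 →
        2 * p * (W2 - W1) = 2 * D1 * W1 * W2 * (p / D1 / W1 - p / D1 / W2) := by
      intro p D1 W1 W2 hD1 h1 h2
      field_simp
    exact alg (P k) _ _ _ (hdθ k) (hW k a c) (hW k a (a k))
  refine ⟨key, ?_⟩
  intro n a x
  have hsign : ∀ (c x : ℝ), 0 < c → Real.sign (c * x) = Real.sign x := by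
    intro c x hc
    rcases lt_trichotomy x 0 with h|h|h
    · rw [Real.sign_of_neg h, Real.sign_of_neg (mul_neg_of_pos_of_neg hc h)]
    · simp [h]
    · rw [Real.sign_of_pos h, Real.sign_of_pos (mul_pos hc h)]
  have hpos : 0 < 2 * d n ^ θ *
      (ω n x + ∑ i ∈ Finset.univ.erase n, if a i = x then P i / D i n ^ θ else 0) *
      (ω n (a n) + ∑ i ∈ Finset.univ.erase n, if a i = a n then P i / D i n ^ θ else 0) := by
    have := hW n a x
    have := hW n a (a n)
    have := hdθ n
    positivity
  rw [key a n x, hsign _ _ hpos]
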